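/- Consider the M/M/n queue with R = λ/μ < n, δ = 1/√R, ζ = δ(R − n) < 0, and scaled stationary count X̃(∞) = δ(X(∞) − R). Then P(X̃(∞) ≤ −ζ) ≤ (2 + δ)|ζ|. -/

import Mathlib

open MeasureTheory Real

theorem erlangC_idle_probability_bound (n : ℕ) (lam mu R δ ζ : ℝ) (ν : ℕ → ℝ)
    (hlam : 0 < lam) (hmu : 0 < mu) (hR : R = lam / mu) (hstable : R < n)
    (hδ : δ = 1 / Real.sqrt R) (hζ : ζ = δ * (R - n))
    (hν : ∀ k, 0 ≤ ν k) (hsum : ∑' k, ν k = 1)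
    (hbal : ∀ k : ℕ, lam * ν k = mu * (min (k + 1) n : ℕ) * ν (k + 1)) :
    (∑' k : ℕ, (if δ * ((k : ℝ) - R) ≤ -ζ then ν k else 0)) ≤ (2 + δ) * |ζ| := by
  have hR0 : 0 < R := by rw [hR]; positivity
  have hsq : 0 < Real.sqrt R := Real.sqrt_pos.mpr hR0
  have hs2 : Real.sqrt R * Real.sqrt R = R := Real.mul_self_sqrt hR0.le
  have hδ0 : 0 < δ := by rw [hδ]; positivity
  have hn0 : (0:ℝ) < n := lt_trans hR0 hstable
  have hsummable : Summable ν := by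
    by_contra h
    rw [tsum_eq_zero_of_not_summable h] at hsum
    norm_num at hsum
  -- rephrased balance equations
  have hbal' : ∀ k : ℕ, (min ((k:ℝ)+1) n) * ν (k+1) = R * ν k := by
    intro k
    have h := hbal k
    have hc : ((min (k + 1) n : ℕ) : ℝ) = min ((k:ℝ)+1) (n:ℝ) := by push_cast; ring
    rw [hc] at h
    rw [hR]
    field_simp
    linarith [h]
  -- g k = min(k,n) * ν k, with ∑ g = R
  set g : ℕ → ℝ := fun k => min ((k:ℝ)) (n:ℝ) * ν k with hg
  have hg_nonneg : ∀ k, 0 ≤ g k := by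
    intro k
    apply mul_nonneg _ (hν k)
    exact le_min (Nat.cast_nonneg k) hn0.le
  have hg_le : ∀ k, g k ≤ (n:ℝ) * ν k := by
    intro k
    exact mul_le_mul_of_nonneg_right (min_le_right _ _) (hν k)
  have hgsummable : Summable g :=
    Summable.of_nonneg_of_le hg_nonneg hg_le (hsummable.mul_left _)
  have hg_succ : ∀ k : ℕ, g (k+1) = R * ν k := by
    intro k
    have := hbal' k
    simp only [hg]
    push_cast
    convert this using 2
  have hg_sum : ∑' k, g k = R := by
    rw [Summable.tsum_eq_zero_add hgsummable]
    have h0 : g 0 = 0 := by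
      simp [hg, min_eq_left hn0.le]
    rw [h0, zero_add]
    calc (∑' k : ℕ, g (k+1)) = ∑' k : ℕ, R * ν k := by
          exact tsum_congr hg_succ
      _ = R * ∑' k, ν k := tsum_mul_left
      _ = R := by rw [hsum, mul_one]
  -- the idle-server identity: ∑ (n - min(k,n)) ν k = n - R
  set h : ℕ → ℝ := fun k => ((n:ℝ) - min ((k:ℝ)) (n:ℝ)) * ν k with hh
  have hh_eq : h = fun k => (n:ℝ) * ν k - g k := by
    funext k; simp only [hh, hg]; ring
  have hhsummable : Summable h := by
    rw [hh_eq]; exact (hsummable.mul_left _).sub hgsummable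
  have hh_nonneg : ∀ k, 0 ≤ h k := by
    intro k
    apply mul_nonneg _ (hν k)
    have : min ((k:ℝ)) (n:ℝ) ≤ n := min_le_right _ _
    linarith
  have hh_sum : ∑' k, h k = (n:ℝ) - R := by
    rw [hh_eq, Summable.tsum_sub (hsummable.mul_left _) hgsummable, tsum_mul_left,
      hsum, mul_one, hg_sum]
  -- the step bound: R ν k ≤ n ν (k+1)
  have hstep : ∀ k : ℕ, R * ν k ≤ (n:ℝ) * ν (k+1) := by
    intro k
    rw [← hbal' k]
    exact mul_le_mul_of_nonneg_right (min_le_right _ _) (hν (k+1))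
  -- geometric lower bound
  have hrn0 : 0 ≤ R / n := by positivity
  have hrn1 : R / n < 1 := (div_lt_one hn0).mpr hstable
  have hgeom : ∀ k j : ℕ, (R/n)^j * ν k ≤ ν (k+j) := by
    intro k j
    induction j with
    | zero => simp
    | succ j ih =>
      have h1 : (R/n)^(j+1) * ν k = (R/n) * ((R/n)^j * ν k) := by ring
      have h2 : (R/n) * ((R/n)^j * ν k) ≤ (R/n) * ν (k+j) :=
        mul_le_mul_of_nonneg_left ih hrn0
      have h3 : (R/n) * ν (k+j) ≤ ν (k+j+1) := by
        rw [div_mul_eq_mul_div, div_le_iff₀ hn0]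
        calc R * ν (k+j) ≤ (n:ℝ) * ν (k+j+1) := hstep (k+j)
          _ = ν (k+j+1) * n := by ring
      calc (R/n)^(j+1) * ν k = (R/n) * ((R/n)^j * ν k) := h1
        _ ≤ (R/n) * ν (k+j) := h2
        _ ≤ ν (k+j+1) := h3
  -- uniform bound on ν
  have hmax : ∀ k, ν k ≤ ((n:ℝ) - R) / n := by
    intro k
    have hsum_tail : Summable (fun j => ν (k + j)) := by
      have := (summable_nat_add_iff k).mpr hsummable
      simpa [add_comm] using this
    have htail_le : ∑' j, ν (k + j) ≤ 1 := by
      have heq := Summable.sum_add_tsum_nat_add k hsummable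
      rw [hsum] at heq
      have hpos : 0 ≤ ∑ i ∈ Finset.range k, ν i :=
        Finset.sum_nonneg fun i _ => hν i
      have heq2 : (∑' (i : ℕ), ν (i + k)) = ∑' j, ν (k + j) := by
        exact tsum_congr fun j => by rw [add_comm]
      linarith [heq2 ▸ heq]
    have hgs : Summable (fun j : ℕ => (R/n)^j * ν k) :=
      (summable_geometric_of_lt_one hrn0 hrn1).mul_right _
    have hle : ∑' j : ℕ, (R/n)^j * ν k ≤ ∑' j, ν (k + j) :=
      Summable.tsum_le_tsum (fun j => hgeom k j) hgs hsum_tail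
    rw [tsum_mul_right, tsum_geometric_of_lt_one hrn0 hrn1] at hle
    have h1 : 0 < 1 - R/n := by linarith
    have h2 : (1 - R/n)⁻¹ * ν k ≤ 1 := le_trans (le_of_eq (by ring)) (le_trans hle htail_le)
    have h3 : ν k ≤ 1 - R/n := by
      have h4 := mul_le_mul_of_nonneg_left h2 h1.le
      rw [mul_one, ← mul_assoc, mul_inv_cancel₀ h1.ne', one_mul] at h4
      exact h4
    calc ν k ≤ 1 - R/n := h3
      _ = ((n:ℝ) - R) / n := by field_simp
  -- rewrite the tsum as a finite sum
  have hiff : ∀ k : ℕ, (δ * ((k : ℝ) - R) ≤ -ζ) ↔ (k ≤ n) := by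
    intro k
    rw [hζ, show -(δ * (R - (n:ℝ))) = δ * ((n:ℝ) - R) by ring,
      mul_le_mul_iff_right₀ hδ0, sub_le_sub_iff_right, Nat.cast_le]
  have htsum_eq : (∑' k : ℕ, (if δ * ((k : ℝ) - R) ≤ -ζ then ν k else 0))
      = ∑ k ∈ Finset.range (n+1), ν k := by
    rw [tsum_eq_sum (s := Finset.range (n+1))
      (fun k hk => if_neg (fun hc => hk (Finset.mem_range.mpr
        (Nat.lt_succ_of_le ((hiff k).mp hc)))))]
    exact Finset.sum_congr rfl fun k hk =>
      if_pos ((hiff k).mpr (Nat.lt_succ_iff.mp (Finset.mem_range.mp hk)))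
  set A := (Finset.range (n+1)).filter (fun k : ℕ => Real.sqrt R ≤ (n:ℝ) - (k:ℝ)) with hA_def
  set B := (Finset.range (n+1)).filter (fun k : ℕ => ¬ Real.sqrt R ≤ (n:ℝ) - (k:ℝ)) with hB_def
  have hsplit : ∑ k ∈ Finset.range (n+1), ν k = ∑ k ∈ A, ν k + ∑ k ∈ B, ν k :=
    (Finset.sum_filter_add_sum_filter_not _ _ _).symm
  -- bound the far sum
  have hA : ∑ k ∈ A, ν k ≤ ((n:ℝ) - R) / Real.sqrt R := by
    have h1 : ∀ k ∈ A, ν k ≤ h k / Real.sqrt R := by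
      intro k hk
      obtain ⟨hk1, hk2⟩ := Finset.mem_filter.mp hk
      have hkn : (k:ℝ) ≤ n := Nat.cast_le.mpr (Nat.lt_succ_iff.mp (Finset.mem_range.mp hk1))
      rw [le_div_iff₀ hsq]
      simp only [hh, min_eq_left hkn]
      nlinarith [hν k]
    calc ∑ k ∈ A, ν k ≤ ∑ k ∈ A, h k / Real.sqrt R := Finset.sum_le_sum h1
      _ = (∑ k ∈ A, h k) / Real.sqrt R := by rw [Finset.sum_div]
      _ ≤ (∑' k, h k) / Real.sqrt R := by
          gcongr
          exact Summable.sum_le_tsum A (fun k _ => hh_nonneg k) hhsummable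
      _ = ((n:ℝ) - R) / Real.sqrt R := by rw [hh_sum]
  -- bound the near sum
  have hcard : (B.card : ℝ) ≤ Real.sqrt R + 1 := by
    have h1 : B.card ≤ (Finset.range ⌈Real.sqrt R⌉₊).card := by
      apply Finset.card_le_card_of_injOn (fun k => n - k)
      · intro k hk
        obtain ⟨hk1, hk2⟩ := Finset.mem_filter.mp hk
        have hkn : k ≤ n := Nat.lt_succ_iff.mp (Finset.mem_range.mp hk1)
        push_neg at hk2
        refine Finset.mem_range.mpr ?_
        have h2 : ((n - k : ℕ):ℝ) < Real.sqrt R := by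
          rw [Nat.cast_sub hkn]; exact hk2
        have h3 : ((n-k:ℕ):ℝ) < (⌈Real.sqrt R⌉₊:ℝ) := lt_of_lt_of_le h2 (Nat.le_ceil _)
        exact_mod_cast h3
      · intro a ha b hb hab
        have ha' : a ≤ n := Nat.lt_succ_iff.mp (Finset.mem_range.mp (Finset.mem_filter.mp ha).1)
        have hb' : b ≤ n := Nat.lt_succ_iff.mp (Finset.mem_range.mp (Finset.mem_filter.mp hb).1)
        simp only at hab
        omega
    rw [Finset.card_range] at h1
    calc (B.card:ℝ) ≤ (⌈Real.sqrt R⌉₊:ℝ) := Nat.cast_le.mpr h1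
      _ ≤ Real.sqrt R + 1 := (Nat.ceil_lt_add_one hsq.le).le
  have hnR : (0:ℝ) ≤ ((n:ℝ) - R) / n := div_nonneg (by linarith) hn0.le
  have hB : ∑ k ∈ B, ν k ≤ (Real.sqrt R + 1) * (((n:ℝ) - R) / n) := by
    calc ∑ k ∈ B, ν k ≤ ∑ _k ∈ B, (((n:ℝ)-R)/n) := Finset.sum_le_sum (fun k _ => hmax k)
      _ = B.card * (((n:ℝ)-R)/n) := by rw [Finset.sum_const, nsmul_eq_mul]
      _ ≤ (Real.sqrt R + 1) * (((n:ℝ)-R)/n) := mul_le_mul_of_nonneg_right hcard hnR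
  -- final arithmetic
  have hζabs : |ζ| = δ * ((n:ℝ) - R) := by
    rw [hζ, abs_of_neg (by nlinarith), ← neg_mul]
    ring
  have hmid : (Real.sqrt R + 1) * (((n:ℝ)-R)/n) ≤ (Real.sqrt R + 1) * (((n:ℝ)-R)/R) := by
    apply mul_le_mul_of_nonneg_left _ (by positivity)
    apply div_le_div_of_nonneg_left (by linarith) hR0 hstable.le
  have hkey : ((n:ℝ) - R) / Real.sqrt R + (Real.sqrt R + 1) * (((n:ℝ)-R)/R)
      = (2 + δ) * (δ * ((n:ℝ) - R)) := by
    rw [hδ]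
    field_simp
    linear_combination ((n:ℝ) - R) * (1 + Real.sqrt R) * hs2
  rw [htsum_eq, hsplit, hζabs]
  linarith [hA, hB, hmid, hkey.le]
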